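/- Let d ≥ 1 and Φ = (φ_0, …, φ_d) ∈ ℝ^{d+1}. Define the shifted phase lists Φ^A := (φ_0 + π/2, φ_1, …, φ_{d−1}, φ_d − π/2) and Φ^S := (φ_0 + π/2, φ_1, …, φ_{d−1}, φ_d + π/2). Then for all x ∈ [-1,1]: U_{Φ^A}(x) = σ_z·U_Φ(x)·σ_z and U_{Φ^S}(x) = −σ_z·U_Φ(x)·σ_z. In particular, if U_Φ(x) has top-left entry P(x) and top-right entry i√(1−x²)·Q(x), then Φ^A realizes (P, −Q) and Φ^S realizes (−P, Q). -/

import Mathlib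

open Matrix Polynomial

/-- The single-qubit Z-rotation `Z(φ) = diag(e^{iφ}, e^{-iφ})`. -/
noncomputable def Zrot (φ : ℝ) : Matrix (Fin 2) (Fin 2) ℂ :=
  !![Complex.exp (Complex.I * (φ : ℂ)), 0; 0, Complex.exp (-(Complex.I * (φ : ℂ)))]

/-- The QSP signal oracle `W(x)`, with diagonal entries `x` and off-diagonal
entries `i·√(1-x²)`. -/
noncomputable def Wosc (x : ℝ) : Matrix (Fin 2) (Fin 2) ℂ :=
  !![(x : ℂ), Complex.I * (Real.sqrt (1 - x ^ 2) : ℂ);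
     Complex.I * (Real.sqrt (1 - x ^ 2) : ℂ), (x : ℂ)]

/-- The QSP unitary `U_Φ(x) = Z(φ₀)·W(x)·Z(φ₁)·W(x)·Z(φ₂)⋯W(x)·Z(φ_d)`. -/
noncomputable def qspU {d : ℕ} (Φ : Fin (d + 1) → ℝ) (x : ℝ) :
    Matrix (Fin 2) (Fin 2) ℂ :=
  Zrot (Φ 0) * (List.ofFn fun k : Fin d => Wosc x * Zrot (Φ k.succ)).prod

/-- The nested QSP unitary `(Φ1 ∘ Φ0)(x)`: the QSP circuit of `Φ1` with each
oracle `W(x)` replaced by `U_{Φ0}(x)`. -/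
noncomputable def nestedU {n m : ℕ} (Φ1 : Fin (m + 1) → ℝ) (Φ0 : Fin (n + 1) → ℝ)
    (x : ℝ) : Matrix (Fin 2) (Fin 2) ℂ :=
  Zrot (Φ1 0) * (List.ofFn fun k : Fin m => qspU Φ0 x * Zrot (Φ1 k.succ)).prod

/-- A phase list `Φ = (φ_0, …, φ_d)` is antisymmetric if `φ_k = -φ_{d-k}` for all `k`. -/
def Antisym {d : ℕ} (Φ : Fin (d + 1) → ℝ) : Prop := ∀ k, Φ (Fin.rev k) = -Φ k

/-- A polynomial has parity `m mod 2` if only monomials of degree congruent to `m`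
modulo 2 have nonzero coefficients. -/
def HasParity {R : Type*} [Semiring R] (m : ℕ) (P : Polynomial R) : Prop :=
  ∀ k, k % 2 ≠ m % 2 → P.coeff k = 0

/-- The Pauli matrix σ_z. -/
def sigmaZ : Matrix (Fin 2) (Fin 2) ℂ := !![1, 0; 0, -1]


lemma Zrot_add (a b : ℝ) : Zrot (a + b) = Zrot a * Zrot b := by
  ext i j
  fin_cases i <;> fin_cases j <;>
    simp [Zrot, Matrix.mul_apply, Fin.sum_univ_two, ← Complex.exp_add, mul_add, neg_add] <;>
    ring_nf

lemma exp_I_pi2 : Complex.exp (Complex.I * ((Real.pi : ℂ) / 2)) = Complex.I := by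
  rw [mul_comm]
  have : ((Real.pi : ℂ) / 2) = (((Real.pi / 2 : ℝ) : ℂ)) := by push_cast; ring
  rw [this, Complex.exp_mul_I, ← Complex.ofReal_cos, ← Complex.ofReal_sin,
    Real.cos_pi_div_two, Real.sin_pi_div_two]
  simp

lemma Zrot_pi2 : Zrot (Real.pi / 2) = Complex.I • sigmaZ := by
  ext i j
  fin_cases i <;> fin_cases j <;>
    simp [Zrot, sigmaZ, Complex.exp_neg, exp_I_pi2, Complex.inv_I]

lemma Zrot_neg_pi2 : Zrot (-(Real.pi / 2)) = (-Complex.I) • sigmaZ := by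
  ext i j
  fin_cases i <;> fin_cases j <;>
    simp [Zrot, sigmaZ, Complex.exp_neg, exp_I_pi2, Complex.inv_I, mul_neg]

lemma sigmaZ_conj_00 (M : Matrix (Fin 2) (Fin 2) ℂ) :
    (sigmaZ * M * sigmaZ) 0 0 = M 0 0 := by
  simp [sigmaZ, Matrix.mul_apply, Matrix.vecMul, dotProduct, Fin.sum_univ_two]

lemma sigmaZ_conj_01 (M : Matrix (Fin 2) (Fin 2) ℂ) :
    (sigmaZ * M * sigmaZ) 0 1 = -(M 0 1) := by
  simp [sigmaZ, Matrix.mul_apply, Matrix.vecMul, dotProduct, Fin.sum_univ_two]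

lemma qspU_split {e : ℕ} (g : Fin (e + 1 + 1) → ℝ) (x : ℝ) :
    qspU g x = Zrot (g 0) *
      (List.ofFn fun k : Fin e => Wosc x * Zrot (g k.castSucc.succ)).prod *
      (Wosc x * Zrot (g (Fin.last e).succ)) := by
  rw [qspU, List.ofFn_succ', List.prod_concat, ← mul_assoc]

/-- Shifting the first phase by `π/2` and the last phase by
`∓π/2` conjugates the QSP unitary by `σ_z` (up to sign); in particular the
shifted protocols realize `(P, -Q)` and `(-P, Q)` respectively. -/
theorem qsp_phase_shift_symmetry (d : ℕ) (hd : 1 ≤ d) (Φ : Fin (d + 1) → ℝ) :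
    ∀ x ∈ Set.Icc (-1 : ℝ) 1,
      qspU (fun k => Φ k + (if k.1 = 0 then Real.pi / 2 else 0) +
          (if k.1 = d then -(Real.pi / 2) else 0)) x =
        sigmaZ * qspU Φ x * sigmaZ ∧
      qspU (fun k => Φ k + (if k.1 = 0 then Real.pi / 2 else 0) +
          (if k.1 = d then Real.pi / 2 else 0)) x =
        -(sigmaZ * qspU Φ x * sigmaZ) ∧
      (qspU (fun k => Φ k + (if k.1 = 0 then Real.pi / 2 else 0) +
          (if k.1 = d then -(Real.pi / 2) else 0)) x) 0 0 = (qspU Φ x) 0 0 ∧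
      (qspU (fun k => Φ k + (if k.1 = 0 then Real.pi / 2 else 0) +
          (if k.1 = d then -(Real.pi / 2) else 0)) x) 0 1 = -((qspU Φ x) 0 1) ∧
      (qspU (fun k => Φ k + (if k.1 = 0 then Real.pi / 2 else 0) +
          (if k.1 = d then Real.pi / 2 else 0)) x) 0 0 = -((qspU Φ x) 0 0) ∧
      (qspU (fun k => Φ k + (if k.1 = 0 then Real.pi / 2 else 0) +
          (if k.1 = d then Real.pi / 2 else 0)) x) 0 1 = (qspU Φ x) 0 1 := by
  obtain ⟨e, rfl⟩ : ∃ e, d = e + 1 := ⟨d - 1, (Nat.succ_pred_eq_of_pos hd).symm⟩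
  intro x hx
  set ΦA : Fin (e + 1 + 1) → ℝ := fun k => Φ k + (if k.1 = 0 then Real.pi / 2 else 0) +
      (if k.1 = e + 1 then -(Real.pi / 2) else 0) with hΦA
  set ΦS : Fin (e + 1 + 1) → ℝ := fun k => Φ k + (if k.1 = 0 then Real.pi / 2 else 0) +
      (if k.1 = e + 1 then Real.pi / 2 else 0) with hΦS
  have hmid : ∀ k : Fin e, ΦA k.castSucc.succ = Φ k.castSucc.succ ∧
      ΦS k.castSucc.succ = Φ k.castSucc.succ := by
    intro k
    have h1 : (k.castSucc.succ : Fin (e + 1 + 1)).1 = k.1 + 1 := rfl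
    have h2 : k.1 + 1 ≠ 0 := by omega
    have h3 : k.1 + 1 ≠ e + 1 := by have := k.2; omega
    constructor <;> simp [hΦA, hΦS, h1, h2, h3, k.2.ne]
  have h0A : ΦA 0 = Real.pi / 2 + Φ 0 := by
    have : ((0 : Fin (e + 1 + 1)) : ℕ) = 0 := rfl
    simp [hΦA, this]; ring
  have h0S : ΦS 0 = Real.pi / 2 + Φ 0 := by
    have : ((0 : Fin (e + 1 + 1)) : ℕ) = 0 := rfl
    simp [hΦS, this]; ring
  have hl : ((Fin.last e).succ : Fin (e + 1 + 1)).1 = e + 1 := rfl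
  have hlA : ΦA (Fin.last e).succ = Φ (Fin.last e).succ + -(Real.pi / 2) := by
    simp [hΦA, hl]
  have hlS : ΦS (Fin.last e).succ = Φ (Fin.last e).succ + Real.pi / 2 := by
    simp [hΦS, hl]
  have hprodA : (List.ofFn fun k : Fin e => Wosc x * Zrot (ΦA k.castSucc.succ)) =
      (List.ofFn fun k : Fin e => Wosc x * Zrot (Φ k.castSucc.succ)) := by
    congr 1; funext k; rw [(hmid k).1]
  have hprodS : (List.ofFn fun k : Fin e => Wosc x * Zrot (ΦS k.castSucc.succ)) =
      (List.ofFn fun k : Fin e => Wosc x * Zrot (Φ k.castSucc.succ)) := by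
    congr 1; funext k; rw [(hmid k).2]
  have hUA : qspU ΦA x = sigmaZ * qspU Φ x * sigmaZ := by
    rw [qspU_split, qspU_split Φ, hprodA, h0A, hlA, Zrot_add, Zrot_add]
    simp only [Zrot_pi2, Zrot_neg_pi2, Matrix.smul_mul, Matrix.mul_smul, smul_smul,
      neg_mul, mul_neg, Complex.I_mul_I, neg_neg, one_smul, neg_smul, mul_assoc]
  have hUS : qspU ΦS x = -(sigmaZ * qspU Φ x * sigmaZ) := by
    rw [qspU_split, qspU_split Φ, hprodS, h0S, hlS, Zrot_add, Zrot_add]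
    simp only [Zrot_pi2, Zrot_neg_pi2, Matrix.smul_mul, Matrix.mul_smul, smul_smul,
      neg_mul, mul_neg, Complex.I_mul_I, neg_neg, one_smul, neg_smul, mul_assoc]
  refine ⟨hUA, hUS, ?_, ?_, ?_, ?_⟩
  · rw [hUA, sigmaZ_conj_00]
  · rw [hUA, sigmaZ_conj_01]
  · rw [hUS]; simp [sigmaZ_conj_00]
  · rw [hUS]; simp [sigmaZ_conj_01]
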